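/- Let n ≥ 2 and let G = ℤ/nℤ with the symmetric generating set S = {g, g⁻¹} for a generator g of G. Then the Hamiltonian difference satisfies ℋ(G,S) = ⌊n/2⌋ − 2; in particular TS(e,e;G) = n and the maximum over h ∈ G∖{e} of TS(e,h;G) equals n + ⌊n/2⌋ − 2. -/

import Mathlib

open scoped Classical

/-- The word length of `g` with respect to a generating set `S`: the least `n` such that
`g` is a product of `n` elements of `S`. -/
noncomputable def wordLength {G : Type*} [Group G] (S : Set G) (g : G) : ℕ :=
  sInf {n | ∃ l : List G, (∀ x ∈ l, x ∈ S) ∧ l.length = n ∧ l.prod = g}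

/-- `g` has depth at least `n` with respect to `S`: multiplying `g` by between `1` and `n`
generators of `S` never increases word length. -/
def HasDepthAtLeast {G : Type*} [Group G] (S : Set G) (g : G) (n : ℕ) : Prop :=
  ∀ l : List G, (∀ x ∈ l, x ∈ S) → 1 ≤ l.length → l.length ≤ n →
    wordLength S (g * l.prod) ≤ wordLength S g

/-- `(G, S)` has unbounded depth: for every `n` there is an element of depth at least `n`. -/
def UnboundedDepth {G : Type*} [Group G] (S : Set G) : Prop :=
  ∀ n : ℕ, ∃ g : G, HasDepthAtLeast S g n

/-- `S` is a finite symmetric generating set of `G`. -/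
structure IsSymmGen {G : Type*} [Group G] (S : Set G) : Prop where
  finite : S.Finite
  symm : ∀ s ∈ S, s⁻¹ ∈ S
  closure_eq_top : Subgroup.closure S = ⊤

/-- The Cayley graph of `G` with respect to `S`: an edge between `g` and `g * s` for
each `s ∈ S`. -/
def cayley {G : Type*} [Group G] (S : Set G) : SimpleGraph G :=
  SimpleGraph.fromRel (fun x y => ∃ s ∈ S, y = x * s)

/-- `TS S b b' F`: the minimal number of edges of a walk in the Cayley graph `Cay(G, S)`
from `b` to `b'` that visits every element of `F` (`0` if no such walk exists). -/
noncomputable def TS {G : Type*} [Group G] (S : Set G) (b b' : G) (F : Set G) : ℕ :=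
  sInf {n | ∃ w : (cayley S).Walk b b', (∀ x ∈ F, x ∈ w.support) ∧ w.length = n}

/-- The Hamiltonian difference of a finite group `G` with generating set `S`:
the maximum over `g ≠ 1` of `TS(1, g; G)`, minus `TS(1, 1; G)`. -/
noncomputable def HamDiff (G : Type*) [Group G] (S : Set G) : ℤ :=
  ((sSup {n : ℕ | ∃ g : G, g ≠ 1 ∧ n = TS S 1 g Set.univ} : ℕ) : ℤ) -
    ((TS S 1 1 Set.univ : ℕ) : ℤ)

/-! ### Auxiliary lemmas -/

section AuxLemmas

variable {G : Type*} [Group G]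

lemma cayley_adj (g : G) {x y : G} :
    (cayley {g, g⁻¹}).Adj x y ↔ x ≠ y ∧ (y = x * g ∨ y = x * g⁻¹) := by
  simp only [cayley, SimpleGraph.fromRel_adj, Set.mem_insert_iff, Set.mem_singleton_iff]
  constructor
  · rintro ⟨hne, (⟨s, (rfl|rfl), rfl⟩ | ⟨s, (rfl|rfl), hx⟩)⟩
    · exact ⟨hne, Or.inl rfl⟩
    · exact ⟨hne, Or.inr rfl⟩
    · exact ⟨hne, Or.inr (by rw [hx]; group)⟩
    · exact ⟨hne, Or.inl (by rw [hx]; group)⟩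
  · rintro ⟨hne, (h | h)⟩
    · exact ⟨hne, Or.inl ⟨g, Or.inl rfl, h⟩⟩
    · exact ⟨hne, Or.inl ⟨g⁻¹, Or.inr rfl, h⟩⟩

/-- The integer lift of a walk in the Cayley graph of `{g, g⁻¹}`. -/
noncomputable def wlift (g : G) : {x y : G} → (cayley {g, g⁻¹}).Walk x y → List ℤ
  | _, _, .nil => [0]
  | x, _, .cons (v := z) _ w => 0 :: (wlift g w).map (· + if z = x * g then 1 else -1)

lemma wlift_cons_zero (g : G) {x y : G} (w : (cayley {g, g⁻¹}).Walk x y) :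
    ∃ T, wlift g w = 0 :: T := by
  cases w with
  | nil => exact ⟨[], rfl⟩
  | cons a w => exact ⟨_, rfl⟩

lemma wlift_spec (g : G) {x y : G} (w : (cayley {g, g⁻¹}).Walk x y) :
    (wlift g w).length = w.length + 1 ∧
    (wlift g w).Chain' (fun a b => (b - a).natAbs = 1) ∧
    (∀ z ∈ w.support, ∃ t ∈ wlift g w, z = x * g ^ t) ∧
    ∃ e, (wlift g w).getLast? = some e ∧ y = x * g ^ e := by
  induction w with
  | nil =>
    refine ⟨rfl, (by simp [wlift]; exact List.isChain_singleton _), ?_, 0, rfl, by simp⟩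
    intro z hz
    simp only [SimpleGraph.Walk.support_nil, List.mem_singleton] at hz
    exact ⟨0, by simp [wlift, hz]⟩
  | @cons x z y a w ih =>
    obtain ⟨ihlen, ihchain, ihcov, e', ihlast, ihe⟩ := ih
    set ε : ℤ := if z = x * g then 1 else -1 with hε
    have hz : z = x * g ^ ε := by
      rw [hε]
      split_ifs with hc
      · simpa using hc
      · rcases (cayley_adj g).mp a with ⟨-, (h | h)⟩
        · exact absurd h hc
        · simpa using h
    have hwl : wlift g (SimpleGraph.Walk.cons a w) = 0 :: (wlift g w).map (· + ε) := rfl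
    obtain ⟨T', hT'⟩ := wlift_cons_zero g w
    refine ⟨?_, ?_, ?_, ?_⟩
    · simp [hwl, ihlen]
    · rw [hwl]
      refine List.isChain_cons.mpr ⟨?_, ?_⟩
      · intro b hb
        rw [hT'] at hb
        simp only [List.map_cons, List.head?_cons, Option.mem_def, Option.some.injEq] at hb
        rw [← hb, hε]
        split_ifs <;> simp
      · rw [List.isChain_map]
        convert (ihchain : List.IsChain _ (wlift g w)) using 2 with p q
        ring_nf
        exact Iff.rfl
    · intro v hv
      rw [SimpleGraph.Walk.support_cons] at hv
      rcases List.mem_cons.mp hv with rfl | hv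
      · exact ⟨0, by simp [hwl], by simp⟩
      · obtain ⟨t, ht, rfl⟩ := ihcov v hv
        refine ⟨t + ε, ?_, ?_⟩
        · rw [hwl]
          exact List.mem_cons_of_mem _ (List.mem_map.mpr ⟨t, ht, rfl⟩)
        · rw [hz, mul_assoc, ← zpow_add, add_comm]
    · refine ⟨e' + ε, ?_, ?_⟩
      · rw [hwl, hT']
        simp only [List.map_cons]
        rw [List.getLast?_cons_cons]
        have hmap : (((0:ℤ) + ε) :: T'.map (· + ε)).getLast? = some (e' + ε) := by
          have := List.getLast?_map (f := (· + ε)) (l := (0:ℤ) :: T')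
          rw [← hT', ihlast] at this
          simpa [hT'] using this
        simpa using hmap
      · rw [ihe, hz, mul_assoc, ← zpow_add, add_comm]

lemma chain_bound {L : List ℤ} (hC : L.Chain' fun a b => (b - a).natAbs = 1) :
    ∀ (i j : ℕ) (a b : ℤ), i ≤ j → L[i]? = some a → L[j]? = some b →
      (b - a).natAbs ≤ j - i := by
  intro i j a b hij ha
  induction j, hij using Nat.le_induction generalizing b with
  | base =>
    intro hb
    rw [ha] at hb
    cases hb
    simp
  | succ j hij ih =>
    intro hb
    obtain ⟨hj1, hbv⟩ := List.getElem?_eq_some_iff.mp hb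
    have hj : j < L.length := by omega
    have h1 := ih (L[j]'hj) (List.getElem?_eq_getElem hj)
    have h2 : ((L[j+1]'hj1) - (L[j]'hj)).natAbs = 1 := by
      have := List.isChain_iff_getElem.mp hC j (by omega)
      simpa [List.get_eq_getElem] using this
    rw [hbv] at h2
    omega

lemma key_lower (n : ℕ) (hn : 2 ≤ n) (k : ℕ) (hk : k < n) (L : List ℤ) (T : List ℤ)
    (hLT : L = 0 :: T)
    (hC : L.Chain' fun a b => (b - a).natAbs = 1)
    (hcov : ∀ c : ZMod n, ∃ t ∈ L, (t : ZMod n) = c)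
    (e : ℤ) (he : L.getLast? = some e) (hek : ((n : ℤ)) ∣ e - (k : ℤ)) :
    (if k = 0 then n else n - 2 + min k (n - k)) ≤ L.length - 1 := by
  haveI : NeZero n := ⟨by omega⟩
  have hne : L ≠ [] := by rw [hLT]; simp
  have h0L : (0 : ℤ) ∈ L := by rw [hLT]; exact List.mem_cons_self
  set F := L.toFinset with hF
  have hFne : F.Nonempty := ⟨0, List.mem_toFinset.mpr h0L⟩
  set M := F.max' hFne with hMdef
  set m := F.min' hFne with hmdef
  have hMmem : M ∈ L := List.mem_toFinset.mp (F.max'_mem hFne)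
  have hmmem : m ∈ L := List.mem_toFinset.mp (F.min'_mem hFne)
  have hMax : ∀ t ∈ L, t ≤ M := fun t ht => F.le_max' t (List.mem_toFinset.mpr ht)
  have hMin : ∀ t ∈ L, m ≤ t := fun t ht => F.min'_le t (List.mem_toFinset.mpr ht)
  have hsurj : Set.SurjOn (fun t : ℤ => (t : ZMod n)) ↑F Set.univ := by
    intro c _
    obtain ⟨t, ht, htc⟩ := hcov c
    exact ⟨t, by simpa [hF] using ht, htc⟩
  have hcard1 : (Finset.univ : Finset (ZMod n)).card ≤ F.card :=
    Finset.card_le_card_of_surjOn _ (by simpa using hsurj)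
  have hcard2 : F.card ≤ (Finset.Icc m M).card := Finset.card_le_card fun t ht =>
    Finset.mem_Icc.mpr ⟨F.min'_le t ht, F.le_max' t ht⟩
  have hrange : (n : ℤ) ≤ M - m + 1 := by
    have h1 : (Finset.Icc m M).card = (M + 1 - m).toNat := Int.card_Icc m M
    have h2 : (Finset.univ : Finset (ZMod n)).card = n := by
      simp [Finset.card_univ, ZMod.card]
    omega
  obtain ⟨i, hiM⟩ := List.mem_iff_getElem?.mp hMmem
  obtain ⟨j, hjm⟩ := List.mem_iff_getElem?.mp hmmem
  have hiL : i < L.length := (List.getElem?_eq_some_iff.mp hiM).1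
  have hjL : j < L.length := (List.getElem?_eq_some_iff.mp hjm).1
  have h00 : L[0]? = some 0 := by simp [hLT]
  have hlast : L[L.length - 1]? = some e := by
    rw [← List.getLast?_eq_getElem?]; exact he
  have hlastlt : L.length - 1 < L.length := by
    have := List.length_pos_iff.mpr hne; omega
  have hM0 : 0 ≤ M := hMax 0 h0L
  have hm0 : m ≤ 0 := hMin 0 h0L
  have heL : e ∈ L := by
    obtain ⟨h1, h2⟩ := List.getElem?_eq_some_iff.mp hlast
    exact h2 ▸ List.getElem_mem _
  have heM : e ≤ M := hMax e heL
  have hem : m ≤ e := hMin e heL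
  have b4 : (e - 0).natAbs ≤ L.length - 1 - 0 := chain_bound hC 0 _ _ _ (by omega) h00 hlast
  obtain ⟨q, hq⟩ := hek
  rcases lt_or_ge e.natAbs (2 * n) with hsm | hbig
  · have hq2 : q < 2 := by
      by_contra hcon
      push_neg at hcon
      have : (n : ℤ) * 2 ≤ (n : ℤ) * q :=
        mul_le_mul_of_nonneg_left hcon (by positivity)
      omega
    have hqm2 : -2 ≤ q := by
      by_contra hcon
      push_neg at hcon
      have : (n : ℤ) * q ≤ (n : ℤ) * (-3) :=
        mul_le_mul_of_nonneg_left (by omega) (by positivity)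
      omega
    rcases le_total i j with hij | hij
    · have b1 : (M - 0).natAbs ≤ i - 0 := chain_bound hC 0 i _ _ (by omega) h00 hiM
      have b2 : (m - M).natAbs ≤ j - i := chain_bound hC i j _ _ hij hiM hjm
      have b3 : (e - m).natAbs ≤ (L.length - 1) - j :=
        chain_bound hC j _ _ _ (by omega) hjm hlast
      interval_cases q <;> split_ifs with hk0 <;> omega
    · have b1 : (m - 0).natAbs ≤ j - 0 := chain_bound hC 0 j _ _ (by omega) h00 hjm
      have b2 : (M - m).natAbs ≤ i - j := chain_bound hC j i _ _ hij hjm hiM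
      have b3 : (e - M).natAbs ≤ (L.length - 1) - i :=
        chain_bound hC i _ _ _ (by omega) hiM hlast
      interval_cases q <;> split_ifs with hk0 <;> omega
  · split_ifs with hk0 <;> omega

noncomputable def ray (g s : G) (hs : s = g ∨ s = g⁻¹) (hs1 : s ≠ 1) :
    (a : G) → (t : ℕ) → (cayley {g, g⁻¹}).Walk a (a * s ^ t)
  | _, 0 => SimpleGraph.Walk.nil.copy rfl (by simp)
  | a, t+1 =>
    (SimpleGraph.Walk.cons (show (cayley {g,g⁻¹}).Adj a (a*s) by
        rw [cayley_adj]
        refine ⟨fun h => hs1 (left_eq_mul.mp h), ?_⟩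
        rcases hs with rfl | rfl
        · exact Or.inl rfl
        · exact Or.inr rfl)
      (ray g s hs hs1 (a*s) t)).copy rfl (by rw [mul_assoc, ← pow_succ'])

lemma ray_length (g s : G) (hs : s = g ∨ s = g⁻¹) (hs1 : s ≠ 1) :
    ∀ (a : G) (t : ℕ), (ray g s hs hs1 a t).length = t
  | _, 0 => by simp [ray]
  | a, t+1 => by simp [ray, ray_length g s hs hs1 (a*s) t]

lemma ray_support (g s : G) (hs : s = g ∨ s = g⁻¹) (hs1 : s ≠ 1) :
    ∀ (a : G) (t : ℕ) (j : ℕ), j ≤ t → a * s ^ j ∈ (ray g s hs hs1 a t).support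
  | _, 0, 0, _ => by simp [ray]
  | _, t+1, 0, _ => by simp [ray]
  | a, t+1, j+1, h => by
    simp only [ray, SimpleGraph.Walk.support_copy, SimpleGraph.Walk.support_cons]
    refine List.mem_cons_of_mem _ ?_
    have hmem := ray_support g s hs hs1 (a*s) t j (by omega)
    have heq : a * s ^ (j+1) = (a * s) * s ^ j := by rw [mul_assoc, ← pow_succ']
    rw [heq]
    exact hmem
  | _, 0, j+1, h => by omega

lemma zpow_eq_zpow_iff_orderOf (g : G) (a b : ℤ) :
    g ^ a = g ^ b ↔ (orderOf g : ℤ) ∣ a - b := by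
  rw [← mul_inv_eq_one, ← zpow_sub, orderOf_dvd_iff_zpow_eq_one]

lemma exists_zpow_lt (g : G) (hz : ∀ x : G, x ∈ Subgroup.zpowers g)
    (ho : 0 < orderOf g) (x : G) : ∃ j : ℕ, j < orderOf g ∧ x = g ^ (j : ℤ) := by
  obtain ⟨z, hzx⟩ := Subgroup.mem_zpowers_iff.mp (hz x)
  have hne : (orderOf g : ℤ) ≠ 0 := by exact_mod_cast ho.ne'
  have h1 : 0 ≤ z % (orderOf g : ℤ) := Int.emod_nonneg z hne
  have h2 : z % (orderOf g : ℤ) < (orderOf g : ℤ) :=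
    Int.emod_lt_of_pos z (by exact_mod_cast ho)
  refine ⟨(z % (orderOf g : ℤ)).toNat, by omega, ?_⟩
  rw [Int.toNat_of_nonneg h1, ← hzx]
  rw [zpow_eq_zpow_iff_orderOf]
  exact ⟨z / orderOf g, by rw [Int.emod_def]; ring⟩

end AuxLemmas

/-- For the cyclic group `ℤ/nℤ` (`n ≥ 2`) with generating set `{g, g⁻¹}` for a
generator `g`: `ℋ = ⌊n/2⌋ - 2`, `TS(e, e; G) = n`, and the maximum over `h ≠ e` of
`TS(e, h; G)` is `n + ⌊n/2⌋ - 2`. -/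
theorem hamDiff_cyclic (n : ℕ) (hn : 2 ≤ n) (g : Multiplicative (ZMod n))
    (hg : Subgroup.closure ({g} : Set (Multiplicative (ZMod n))) = ⊤) :
    HamDiff (Multiplicative (ZMod n)) {g, g⁻¹} = ((n / 2 : ℕ) : ℤ) - 2 ∧
    TS ({g, g⁻¹} : Set (Multiplicative (ZMod n))) 1 1 Set.univ = n ∧
    sSup {k : ℕ | ∃ h : Multiplicative (ZMod n), h ≠ 1 ∧
        k = TS ({g, g⁻¹} : Set (Multiplicative (ZMod n))) 1 h Set.univ} =
      n + n / 2 - 2 := by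
  haveI : NeZero n := ⟨by omega⟩
  have hz : ∀ x : Multiplicative (ZMod n), x ∈ Subgroup.zpowers g := by
    intro x
    rw [Subgroup.zpowers_eq_closure, hg]
    trivial
  have hord : orderOf g = n := by
    rw [orderOf_eq_card_of_forall_mem_zpowers hz]
    simp [ZMod.card]
  have hg1 : g ≠ 1 := by
    intro h
    rw [h, orderOf_one] at hord
    omega
  have hginv1 : g⁻¹ ≠ 1 := fun h => hg1 (inv_eq_one.mp h)
  have hdvd : ∀ a b : ℤ, g ^ a = g ^ b ↔ (n : ℤ) ∣ a - b := by
    intro a b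
    rw [zpow_eq_zpow_iff_orderOf, hord]
  have hexists : ∀ x : Multiplicative (ZMod n), ∃ j : ℕ, j < n ∧ x = g ^ (j : ℤ) := by
    intro x
    obtain ⟨j, hj, hx⟩ := exists_zpow_lt g hz (by omega) x
    exact ⟨j, by omega, hx⟩
  -- the closed walk of length n
  have hmem0 : n ∈ {m | ∃ w : (cayley ({g, g⁻¹} : Set (Multiplicative (ZMod n)))).Walk 1 1,
      (∀ x ∈ (Set.univ : Set (Multiplicative (ZMod n))), x ∈ w.support) ∧ w.length = m} := by
    have h1n : (1 : Multiplicative (ZMod n)) * g ^ n = 1 := by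
      rw [one_mul]
      have h := pow_orderOf_eq_one g
      rwa [hord] at h
    refine ⟨(ray g g (Or.inl rfl) hg1 1 n).copy rfl h1n, ?_, ?_⟩
    · intro x _
      obtain ⟨j, hj, rfl⟩ := hexists x
      rw [SimpleGraph.Walk.support_copy]
      have := ray_support g g (Or.inl rfl) hg1 1 n j (by omega)
      simpa [zpow_natCast] using this
    · simp [ray_length]
  -- the covering walks to g^k, 1 ≤ k < n
  have hup : ∀ k : ℕ, 1 ≤ k → k < n →
      (n - 2 + min k (n - k)) ∈
        {m | ∃ w : (cayley ({g, g⁻¹} : Set (Multiplicative (ZMod n)))).Walk 1 (g ^ (k : ℤ)),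
          (∀ x ∈ (Set.univ : Set (Multiplicative (ZMod n))), x ∈ w.support) ∧ w.length = m} := by
    intro k hk1 hkn
    rcases le_total k (n - k) with hle | hle
    · have heq : (1 : Multiplicative (ZMod n)) * g⁻¹ ^ (n - k) = g ^ (k : ℤ) := by
        rw [one_mul, inv_pow, ← zpow_natCast, ← zpow_neg]
        refine (hdvd _ _).mpr ⟨-1, ?_⟩
        push_cast [Nat.cast_sub hkn.le]
        ring
      set w1 := ray g g (Or.inl rfl) hg1 1 (k-1) with hw1
      set w3 := (ray g g⁻¹ (Or.inr rfl) hginv1 1 (n-k)).copy rfl heq with hw3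
      refine ⟨(w1.append w1.reverse).append w3, ?_, ?_⟩
      · intro x _
        obtain ⟨j, hj, rfl⟩ := hexists x
        rw [SimpleGraph.Walk.mem_support_append_iff]
        rcases le_or_gt j (k-1) with hjk | hjk
        · left
          rw [SimpleGraph.Walk.mem_support_append_iff]
          left
          have := ray_support g g (Or.inl rfl) hg1 1 (k-1) j hjk
          simpa [zpow_natCast] using this
        · right
          rw [hw3, SimpleGraph.Walk.support_copy]
          have hxe : g ^ (j : ℤ) = 1 * g⁻¹ ^ (n - j) := by
            rw [one_mul, inv_pow, ← zpow_natCast, ← zpow_neg]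
            refine (hdvd _ _).mpr ⟨1, ?_⟩
            push_cast [Nat.cast_sub hj.le]
            ring
          rw [hxe]
          exact ray_support g g⁻¹ (Or.inr rfl) hginv1 1 (n-k) (n-j) (by omega)
      · simp only [SimpleGraph.Walk.length_append, SimpleGraph.Walk.length_copy,
          SimpleGraph.Walk.length_reverse, hw1, hw3, ray_length]
        rw [min_eq_left hle]
        omega
    · have heq : (1 : Multiplicative (ZMod n)) * g ^ k = g ^ (k : ℤ) := by
        rw [one_mul, zpow_natCast]
      set w1 := ray g g⁻¹ (Or.inr rfl) hginv1 1 (n-k-1) with hw1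
      set w3 := (ray g g (Or.inl rfl) hg1 1 k).copy rfl heq with hw3
      refine ⟨(w1.append w1.reverse).append w3, ?_, ?_⟩
      · intro x _
        obtain ⟨j, hj, rfl⟩ := hexists x
        rw [SimpleGraph.Walk.mem_support_append_iff]
        rcases le_or_gt j k with hjk | hjk
        · right
          rw [hw3, SimpleGraph.Walk.support_copy]
          have := ray_support g g (Or.inl rfl) hg1 1 k j hjk
          simpa [zpow_natCast] using this
        · left
          rw [SimpleGraph.Walk.mem_support_append_iff]
          left
          have hxe : g ^ (j : ℤ) = 1 * g⁻¹ ^ (n - j) := by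
            rw [one_mul, inv_pow, ← zpow_natCast, ← zpow_neg]
            refine (hdvd _ _).mpr ⟨1, ?_⟩
            push_cast [Nat.cast_sub hj.le]
            ring
          rw [hxe]
          exact ray_support g g⁻¹ (Or.inr rfl) hginv1 1 (n-k-1) (n-j) (by omega)
      · simp only [SimpleGraph.Walk.length_append, SimpleGraph.Walk.length_copy,
          SimpleGraph.Walk.length_reverse, hw1, hw3, ray_length]
        rw [min_eq_right hle]
        omega
  -- the per-walk lower bound
  have hlow : ∀ (k : ℕ), k < n → ∀ h : Multiplicative (ZMod n), h = g ^ (k : ℤ) →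
      ∀ m ∈ {m | ∃ w : (cayley ({g, g⁻¹} : Set (Multiplicative (ZMod n)))).Walk 1 h,
          (∀ x ∈ (Set.univ : Set (Multiplicative (ZMod n))), x ∈ w.support) ∧ w.length = m},
      (if k = 0 then n else n - 2 + min k (n - k)) ≤ m := by
    rintro k hk h rfl m ⟨w, hcov, rfl⟩
    obtain ⟨hlen, hchain, hsupp, e, hlast, he⟩ := wlift_spec g w
    obtain ⟨T, hT⟩ := wlift_cons_zero g w
    have hres : ∀ c : ZMod n, ∃ t ∈ wlift g w, ((t : ZMod n)) = c := by
      intro c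
      obtain ⟨t, ht, hteq⟩ := hsupp (g ^ ((c.val : ℕ) : ℤ)) (hcov _ (Set.mem_univ _))
      refine ⟨t, ht, ?_⟩
      have hd : (n : ℤ) ∣ (c.val : ℤ) - t := (hdvd _ _).mp (by rw [hteq, one_mul])
      have h0 := (ZMod.intCast_zmod_eq_zero_iff_dvd _ n).mpr hd
      push_cast at h0
      have hv : ((c.val : ℕ) : ZMod n) = c := ZMod.natCast_rightInverse c
      rw [sub_eq_zero] at h0
      exact (h0.symm.trans hv)
    have hek : (n : ℤ) ∣ e - (k : ℤ) := by
      refine (hdvd _ _).mp ?_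
      rw [one_mul] at he
      exact he.symm
    have hkey := key_lower n hn k hk (wlift g w) T hT hchain hres e hlast hek
    rw [hlen] at hkey
    omega
  -- TS(1,1) = n
  have hTS1 : TS ({g, g⁻¹} : Set (Multiplicative (ZMod n))) 1 1 Set.univ = n := by
    have h1eq : (1 : Multiplicative (ZMod n)) = g ^ ((0 : ℕ) : ℤ) := by simp
    refine le_antisymm (Nat.sInf_le hmem0) ?_
    refine le_csInf ⟨n, hmem0⟩ ?_
    intro m hm
    have := hlow 0 (by omega) 1 (by simp) m hm
    simpa using this
  -- TS at the half point
  set k₀ := n / 2 with hk₀def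
  have hk₀1 : 1 ≤ k₀ := by omega
  have hk₀n : k₀ < n := by omega
  have hmin₀ : min k₀ (n - k₀) = k₀ := min_eq_left (by omega)
  have hTSh : TS ({g, g⁻¹} : Set (Multiplicative (ZMod n))) 1 (g ^ (k₀ : ℤ)) Set.univ
      = n - 2 + k₀ := by
    refine le_antisymm ?_ ?_
    · have := Nat.sInf_le (hup k₀ hk₀1 hk₀n)
      rw [hmin₀] at this
      exact this
    · refine le_csInf ⟨_, hup k₀ hk₀1 hk₀n⟩ ?_
      intro m hm
      have := hlow k₀ hk₀n _ rfl m hm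
      rw [if_neg (by omega), hmin₀] at this
      exact this
  have hh₀ne : g ^ (k₀ : ℤ) ≠ 1 := by
    intro hcon
    have : (n : ℤ) ∣ (k₀ : ℤ) - (0 : ℤ) := by
      refine (hdvd _ _).mp ?_
      rw [hcon]
      simp
    have h2 : (n : ℤ) ∣ (k₀ : ℤ) := by simpa using this
    have h3 : (n : ℤ) ≤ (k₀ : ℤ) := Int.le_of_dvd (by exact_mod_cast (by omega : 0 < k₀)) h2
    omega
  -- the sSup set
  set A := {k : ℕ | ∃ h : Multiplicative (ZMod n), h ≠ 1 ∧
      k = TS ({g, g⁻¹} : Set (Multiplicative (ZMod n))) 1 h Set.univ} with hA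
  have hbddA : ∀ m ∈ A, m ≤ n + n / 2 - 2 := by
    rintro m ⟨h, hh1, rfl⟩
    obtain ⟨j, hj, rfl⟩ := hexists h
    have hj1 : 1 ≤ j := by
      rcases Nat.eq_zero_or_pos j with rfl | h'
      · exact absurd (by simp) hh1
      · exact h'
    have := Nat.sInf_le (hup j hj1 hj)
    rw [TS]
    omega
  have hmemA : (n + n / 2 - 2) ∈ A := by
    refine ⟨g ^ (k₀ : ℤ), hh₀ne, ?_⟩
    rw [hTSh]
    omega
  have hsSupA : sSup A = n + n / 2 - 2 :=
    le_antisymm (csSup_le ⟨_, hmemA⟩ hbddA) (le_csSup ⟨n + n / 2 - 2, hbddA⟩ hmemA)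
  refine ⟨?_, hTS1, hsSupA⟩
  rw [HamDiff]
  rw [show {n_1 : ℕ | ∃ g_1 : Multiplicative (ZMod n), g_1 ≠ 1 ∧
      n_1 = TS {g, g⁻¹} 1 g_1 Set.univ} = A from rfl]
  rw [hsSupA, hTS1]
  omega
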